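/- For γ, θ ∈ ℝ, the four quaternions i, e^{γk}·i, e^{θk}·i, e^{(θ−γ)k}·i pairwise commute if and only if γ ∈ πℤ and θ ∈ πℤ. (Hence among the traceless representations ψ(γ,θ) of the four-punctured sphere group, exactly the four corner points of the pillowcase correspond to representations with abelian image, and all other points correspond to irreducible representations.) -/

import Mathlib

open Quaternion

noncomputable section

/-- The quaternion `i`. -/
def qi : ℍ[ℝ] := ⟨0, 1, 0, 0⟩

/-- The quaternion `k`. -/
def qk : ℍ[ℝ] := ⟨0, 0, 0, 1⟩

/-- The quaternionic exponential `e^{tQ} = cos t + (sin t) • Q` for a pure unit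
quaternion `Q`. -/
def expQ (t : ℝ) (Q : ℍ[ℝ]) : ℍ[ℝ] := ((Real.cos t : ℝ) : ℍ[ℝ]) + (Real.sin t) • Q

@[simp] lemma qi_re : qi.re = 0 := rfl
@[simp] lemma qi_imI : qi.imI = 1 := rfl
@[simp] lemma qi_imJ : qi.imJ = 0 := rfl
@[simp] lemma qi_imK : qi.imK = 0 := rfl
@[simp] lemma qk_re : qk.re = 0 := rfl
@[simp] lemma qk_imI : qk.imI = 0 := rfl
@[simp] lemma qk_imJ : qk.imJ = 0 := rfl
@[simp] lemma qk_imK : qk.imK = 1 := rfl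

lemma comm_iff (t : ℝ) : Commute qi (expQ t qk * qi) ↔ Real.sin t = 0 := by
  unfold Commute SemiconjBy expQ
  rw [Quaternion.ext_iff]
  simp only [Quaternion.re_mul]
  simp
  constructor <;> intro h <;> linarith

lemma comm_iff2 (a b : ℝ) : Commute (expQ a qk * qi) (expQ b qk * qi) ↔
    Real.sin (b - a) = 0 := by
  unfold Commute SemiconjBy expQ
  rw [Quaternion.ext_iff, Real.sin_sub]
  simp
  constructor <;> intro h <;> [linarith; constructor <;> linarith]

/-- The representation `ψ(γ,θ)` of the four-punctured sphere group has abelian image if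
and only if `(γ,θ)` is a corner point of the pillowcase: the four quaternions `i`,
`e^{γk}i`, `e^{θk}i`, `e^{(θ-γ)k}i` pairwise commute iff `γ ∈ πℤ` and `θ ∈ πℤ`. -/
theorem psi_abelian_iff_corner (γ θ : ℝ) :
    (Commute qi (expQ γ qk * qi) ∧
     Commute qi (expQ θ qk * qi) ∧
     Commute qi (expQ (θ - γ) qk * qi) ∧
     Commute (expQ γ qk * qi) (expQ θ qk * qi) ∧
     Commute (expQ γ qk * qi) (expQ (θ - γ) qk * qi) ∧
     Commute (expQ θ qk * qi) (expQ (θ - γ) qk * qi)) ↔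
    ((∃ m : ℤ, γ = Real.pi * m) ∧ (∃ n : ℤ, θ = Real.pi * n)) := by
  simp only [comm_iff, comm_iff2]
  constructor
  · rintro ⟨h1, h2, -⟩
    obtain ⟨m, hm⟩ := Real.sin_eq_zero_iff.mp h1
    obtain ⟨n, hn⟩ := Real.sin_eq_zero_iff.mp h2
    exact ⟨⟨m, by linarith [hm]⟩, ⟨n, by linarith [hn]⟩⟩
  · rintro ⟨⟨m, hm⟩, ⟨n, hn⟩⟩
    subst hm hn
    refine ⟨?_, ?_, ?_, ?_, ?_, ?_⟩ <;>
      apply Real.sin_eq_zero_iff.mpr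
    · exact ⟨m, by ring⟩
    · exact ⟨n, by ring⟩
    · exact ⟨n - m, by push_cast; ring⟩
    · exact ⟨n - m, by push_cast; ring⟩
    · exact ⟨n - 2*m, by push_cast; ring⟩
    · exact ⟨-m, by push_cast; ring⟩
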